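/- Let A and B be row-regular m×n matrices over the max-plus semiring and suppose Tr(B⁻A) ≤ 0, where Tr(C) = max(tr C, …, tr Cⁿ) for the n×n matrix C = B⁻A. Then for every regular vector u, the vector x = (B⁻A)* u satisfies the two-sided inequality A x ≤ B x. -/

import Mathlib

noncomputable section

/-- The max-plus carrier: ℝ ∪ {-∞}, with ⊥ playing the role of -∞. -/
abbrev MP := WithBot ℝ

/-- Max-plus matrix product: (A⊗B)_ik = max_j (a_ij + b_jk). -/
def mpMul {m n p : ℕ} (A : Matrix (Fin m) (Fin n) MP) (B : Matrix (Fin n) (Fin p) MP) :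
    Matrix (Fin m) (Fin p) MP :=
  fun i k => Finset.univ.sup fun j => A i j + B j k

/-- Max-plus matrix-vector product: (Ax)_i = max_j (a_ij + x_j). -/
def mpMulVec {m n : ℕ} (A : Matrix (Fin m) (Fin n) MP) (x : Fin n → MP) : Fin m → MP :=
  fun i => Finset.univ.sup fun j => A i j + x j

/-- Conjugate (multiplicative inverse transpose): (A⁻)_ij = -a_ji if a_ji ≠ -∞, else -∞. -/
def mpConj {m n : ℕ} (A : Matrix (Fin m) (Fin n) MP) : Matrix (Fin n) (Fin m) MP :=
  fun i j => (A j i).map fun r => -r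

/-- Tropical identity matrix: 0 on the diagonal, -∞ elsewhere. -/
def mpId (n : ℕ) : Matrix (Fin n) (Fin n) MP :=
  fun i j => if i = j then (0 : MP) else ⊥

/-- Tropical matrix powers, A⁰ = I. -/
def mpPow {n : ℕ} (A : Matrix (Fin n) (Fin n) MP) : ℕ → Matrix (Fin n) (Fin n) MP
  | 0 => mpId n
  | k + 1 => mpMul A (mpPow A k)

/-- Tropical trace: tr A = max_i a_ii. -/
def mpTr {n : ℕ} (A : Matrix (Fin n) (Fin n) MP) : MP :=
  Finset.univ.sup fun i => A i i

/-- Tr(A) = tr A ⊕ tr A² ⊕ ⋯ ⊕ tr Aⁿ. -/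
def mpTrFun {n : ℕ} (A : Matrix (Fin n) (Fin n) MP) : MP :=
  (Finset.Icc 1 n).sup fun k => mpTr (mpPow A k)

/-- Bounded Kleene star: A* = I ⊕ A ⊕ ⋯ ⊕ A^{n-1}. -/
def mpStar {n : ℕ} (A : Matrix (Fin n) (Fin n) MP) : Matrix (Fin n) (Fin n) MP :=
  fun i j => (Finset.range n).sup fun k => mpPow A k i j

/-- Entrywise max of matrices: A ⊕ B. -/
def mpAdd {m n : ℕ} (A B : Matrix (Fin m) (Fin n) MP) : Matrix (Fin m) (Fin n) MP :=
  fun i j => A i j ⊔ B i j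

/-- Strictly row-monomial: exactly one entry ≠ -∞ in each row. -/
def RowMonomial {m n : ℕ} (A : Matrix (Fin m) (Fin n) MP) : Prop :=
  ∀ i, ∃! j, A i j ≠ ⊥

/-- Row-regular: at least one entry ≠ -∞ in each row. -/
def RowRegular {m n : ℕ} (A : Matrix (Fin m) (Fin n) MP) : Prop :=
  ∀ i, ∃ j, A i j ≠ ⊥

/-- Regular vector: all entries finite. -/
def Regular {n : ℕ} (x : Fin n → MP) : Prop := ∀ j, x j ≠ ⊥

/- ====== auxiliary machinery ====== -/

lemma mp_add_sup {ι : Type*} (c : MP) (s : Finset ι) (f : ι → MP) :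
    c + s.sup f = s.sup fun x => c + f x := by
  induction s using Finset.cons_induction with
  | empty => simp
  | cons a s ha ih =>
      rw [Finset.sup_cons, Finset.sup_cons, ← ih]
      rcases le_total (f a) (s.sup f) with h | h
      · simp [sup_eq_right.mpr h, sup_eq_right.mpr (add_le_add_right h c)]
      · simp [sup_eq_left.mpr h, sup_eq_left.mpr (add_le_add_right h c)]

/-- Weight of the length-`p` path `w 0, w 1, …, w p`. -/
def wt {n : ℕ} (C : Matrix (Fin n) (Fin n) MP) : ℕ → (ℕ → Fin n) → MP
  | 0, _ => 0
  | p+1, w => C (w 0) (w 1) + wt C p fun t => w (t+1)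

lemma wt_congr {n : ℕ} (C : Matrix (Fin n) (Fin n) MP) :
    ∀ (p : ℕ) (v w : ℕ → Fin n), (∀ t ≤ p, v t = w t) → wt C p v = wt C p w := by
  intro p
  induction p with
  | zero => intro v w _; rfl
  | succ p ih =>
      intro v w h
      show C (v 0) (v 1) + wt C p (fun t => v (t+1)) = C (w 0) (w 1) + wt C p (fun t => w (t+1))
      rw [h 0 (by omega), h 1 (by omega),
        ih (fun t => v (t+1)) (fun t => w (t+1)) (fun t ht => h (t+1) (by omega))]

lemma wt_add {n : ℕ} (C : Matrix (Fin n) (Fin n) MP) :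
    ∀ (p q : ℕ) (w : ℕ → Fin n),
      wt C (p + q) w = wt C p w + wt C q fun t => w (t + p) := by
  intro p
  induction p with
  | zero => intro q w; simp [wt]
  | succ p ih =>
      intro q w
      have e1 : p + 1 + q = (p + q) + 1 := by omega
      calc wt C (p+1+q) w
          = C (w 0) (w 1) + wt C (p+q) (fun t => w (t+1)) := by rw [e1]; rfl
        _ = C (w 0) (w 1) + (wt C p (fun t => w (t+1)) +
              wt C q (fun t => w (t + p + 1))) := by rw [ih q (fun t => w (t+1))]
        _ = (C (w 0) (w 1) + wt C p (fun t => w (t+1))) +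
              wt C q (fun t => w (t + p + 1)) := (add_assoc _ _ _).symm
        _ = wt C (p+1) w + wt C q (fun t => w (t + (p+1))) := by
              have hcg : wt C q (fun t => w (t + p + 1)) = wt C q (fun t => w (t + (p+1))) :=
                wt_congr C q _ _ (fun t _ =>
                  congrArg w (by omega))
              rw [hcg]
              rfl

lemma wt_le_pow {n : ℕ} (C : Matrix (Fin n) (Fin n) MP) :
    ∀ (p : ℕ) (w : ℕ → Fin n), wt C p w ≤ mpPow C p (w 0) (w p) := by
  intro p
  induction p with
  | zero => intro w; simp [wt, mpPow, mpId]
  | succ p ih =>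
      intro w
      show C (w 0) (w 1) + wt C p (fun t => w (t+1)) ≤ mpPow C (p+1) (w 0) (w (p+1))
      have h1 : C (w 0) (w 1) + wt C p (fun t => w (t+1)) ≤
          C (w 0) (w 1) + mpPow C p (w 1) (w (p+1)) :=
        add_le_add_right (ih (fun t => w (t+1))) _
      refine h1.trans ?_
      exact Finset.le_sup (f := fun j => C (w 0) j + mpPow C p j (w (p+1)))
        (Finset.mem_univ (w 1))

lemma pow_le_of_paths {n : ℕ} (C : Matrix (Fin n) (Fin n) MP) :
    ∀ (p : ℕ) (i j : Fin n) (X : MP),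
      (∀ w : ℕ → Fin n, w 0 = i → w p = j → wt C p w ≤ X) → mpPow C p i j ≤ X := by
  intro p
  induction p with
  | zero =>
      intro i j X h
      show mpId n i j ≤ X
      unfold mpId
      by_cases hij : i = j
      · subst hij
        simpa [wt] using h (fun _ => i) rfl rfl
      · simp [hij]
  | succ p ih =>
      intro i j X h
      show (mpMul C (mpPow C p)) i j ≤ X
      refine Finset.sup_le fun l _ => ?_
      by_cases hbot : C i l = ⊥
      · simp [hbot]
      · obtain ⟨c, hc⟩ := WithBot.ne_bot_iff_exists.mp hbot
        have hcc : ((c : ℝ) : MP) + ((-c : ℝ) : MP) = 0 := by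
          rw [← WithBot.coe_add]; norm_num
        have hcc' : ((-c : ℝ) : MP) + ((c : ℝ) : MP) = 0 := by
          rw [← WithBot.coe_add]; norm_num
        have hpow : mpPow C p l j ≤ ((-c : ℝ) : MP) + X := by
          refine ih l j _ fun w hw0 hwp => ?_
          set w' : ℕ → Fin n := fun t => if t = 0 then i else w (t - 1) with hw'
          have hwt : wt C (p+1) w' = C i l + wt C p w := by
            show C (w' 0) (w' 1) + wt C p (fun t => w' (t+1)) = _
            have e0 : w' 0 = i := by simp [hw']
            have e1 : w' 1 = l := by simp [hw', hw0]
            have e2 : (fun t => w' (t+1)) = w := by funext t; simp [hw']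
            rw [e0, e1, e2]
          have hle : C i l + wt C p w ≤ X := by
            rw [← hwt]
            exact h w' (by simp [hw']) (by simp [hw', hwp])
          calc wt C p w = ((-c : ℝ) : MP) + (C i l + wt C p w) := by
                rw [← hc, ← add_assoc, hcc', zero_add]
            _ ≤ ((-c : ℝ) : MP) + X := add_le_add_right hle _
        calc C i l + mpPow C p l j ≤ ((c : ℝ) : MP) + (((-c : ℝ) : MP) + X) := by
              rw [← hc]; exact add_le_add_right hpow _
          _ = X := by rw [← add_assoc, hcc, zero_add]

lemma pow_n_le_star {n : ℕ} (C : Matrix (Fin n) (Fin n) MP)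
    (htr : mpTrFun C ≤ 0) (i j : Fin n) : mpPow C n i j ≤ mpStar C i j := by
  refine pow_le_of_paths C n i j _ fun w hw0 hwn => ?_
  obtain ⟨a, b, hab, heq⟩ := Fintype.exists_ne_map_eq_of_card_lt
    (fun t : Fin (n+1) => w t) (by simp)
  obtain ⟨a', b', ha'b', hb'n, hweq⟩ :
      ∃ a' b' : ℕ, a' < b' ∧ b' ≤ n ∧ w a' = w b' := by
    rcases lt_or_gt_of_ne (fun h : (a : ℕ) = (b : ℕ) => hab (Fin.ext h)) with h | h
    · exact ⟨a, b, h, by omega, heq⟩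
    · exact ⟨b, a, h, by omega, heq.symm⟩
  obtain ⟨d, e, hd1, hbd, hn⟩ :
      ∃ d e : ℕ, 1 ≤ d ∧ b' = a' + d ∧ n = a' + d + e := ⟨b' - a', n - b', by omega, by omega, by omega⟩
  -- split the path
  have hsplit : wt C n w =
      wt C a' w + (wt C d (fun t => w (t + a')) + wt C e (fun t => w (t + (a' + d)))) := by
    calc wt C n w = wt C (a' + (d + e)) w := by rw [show a' + (d + e) = n by omega]
      _ = wt C a' w + wt C (d + e) (fun t => w (t + a')) := wt_add C a' (d+e) w
      _ = wt C a' w + (wt C d (fun t => w (t + a')) +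
            wt C e (fun t => w (t + d + a'))) := by rw [wt_add C d e (fun t => w (t + a'))]
      _ = _ := by
            rw [wt_congr C e (fun t => w (t + d + a')) (fun t => w (t + (a' + d)))
              (fun t _ => by show w (t + d + a') = w (t + (a' + d)); congr 1; omega)]
  -- the cycle has nonpositive weight
  have hcyc : wt C d (fun t => w (t + a')) ≤ 0 := by
    have h1 : wt C d (fun t => w (t + a')) ≤ mpPow C d (w a') (w (d + a')) := by
      simpa using wt_le_pow C d (fun t => w (t + a'))
    have h2 : w (d + a') = w a' := by rw [show d + a' = b' by omega, ← hweq]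
    rw [h2] at h1
    refine h1.trans ?_
    have h3 : mpPow C d (w a') (w a') ≤ mpTr (mpPow C d) :=
      Finset.le_sup (f := fun i' => mpPow C d i' i') (Finset.mem_univ (w a'))
    refine h3.trans (le_trans ?_ htr)
    exact Finset.le_sup (f := fun k => mpTr (mpPow C k)) (Finset.mem_Icc.mpr ⟨hd1, by omega⟩)
  -- the shortcut path
  set w2 : ℕ → Fin n := fun t => if t < a' then w t else w (t + d) with hw2
  have hpre : wt C a' w2 = wt C a' w := by
    refine wt_congr C a' w2 w fun t ht => ?_
    rcases lt_or_eq_of_le ht with h | h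
    · simp [hw2, h]
    · subst h
      simp only [hw2, lt_irrefl, if_neg (lt_irrefl _)]
      rw [show t + d = b' by omega, ← hweq]
  have hsuf : (fun t => w2 (t + a')) = fun t => w (t + (a' + d)) := by
    funext t
    simp only [hw2, if_neg (by omega : ¬ t + a' < a')]
    congr 1; omega
  have hw2wt : wt C (a' + e) w2 = wt C a' w + wt C e (fun t => w (t + (a' + d))) := by
    rw [wt_add C a' e w2, hpre, hsuf]
  have hend : wt C (a' + e) w2 ≤ mpStar C i j := by
    have h1 := wt_le_pow C (a' + e) w2
    have h20 : w2 0 = i := by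
      by_cases h : 0 < a'
      · simpa [hw2, h] using hw0
      · have ha0 : a' = 0 := by omega
        simp only [hw2, if_neg (by omega : ¬ (0:ℕ) < a')]
        rw [show 0 + d = b' by omega, ← hweq, ha0, hw0]
    have h21 : w2 (a' + e) = j := by
      simp only [hw2, if_neg (by omega : ¬ a' + e < a')]
      rw [show a' + e + d = n by omega, hwn]
    rw [h20, h21] at h1
    refine h1.trans ?_
    exact Finset.le_sup (f := fun k => mpPow C k i j) (Finset.mem_range.mpr (by omega))
  calc wt C n w = wt C a' w + (wt C d (fun t => w (t + a')) +
        wt C e (fun t => w (t + (a' + d)))) := hsplit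
    _ ≤ wt C a' w + (0 + wt C e (fun t => w (t + (a' + d)))) :=
        add_le_add_right (add_le_add_left hcyc _) _
    _ = wt C (a' + e) w2 := by rw [zero_add, hw2wt]
    _ ≤ mpStar C i j := hend

lemma mul_star_le {n : ℕ} (C : Matrix (Fin n) (Fin n) MP)
    (htr : mpTrFun C ≤ 0) (i j : Fin n) : mpMul C (mpStar C) i j ≤ mpStar C i j := by
  refine Finset.sup_le fun l _ => ?_
  show C i l + mpStar C l j ≤ mpStar C i j
  have : mpStar C l j = (Finset.range n).sup fun k => mpPow C k l j := rfl
  rw [this, mp_add_sup]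
  refine Finset.sup_le fun k hk => ?_
  have h1 : C i l + mpPow C k l j ≤ mpPow C (k+1) i j :=
    Finset.le_sup (f := fun l' => C i l' + mpPow C k l' j) (Finset.mem_univ l)
  refine h1.trans ?_
  have hk' : k + 1 ≤ n := Finset.mem_range.mp hk
  rcases lt_or_eq_of_le hk' with h | h
  · exact Finset.le_sup (f := fun k' => mpPow C k' i j) (Finset.mem_range.mpr h)
  · rw [h]; exact pow_n_le_star C htr i j

theorem stmt9 {m n : ℕ} (A B : Matrix (Fin m) (Fin n) MP)
    (hA : RowRegular A) (hB : RowRegular B)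
    (htr : mpTrFun (mpMul (mpConj B) A) ≤ 0)
    (u : Fin n → MP) (hu : Regular u) :
    ∀ i, mpMulVec A (mpMulVec (mpStar (mpMul (mpConj B) A)) u) i ≤
      mpMulVec B (mpMulVec (mpStar (mpMul (mpConj B) A)) u) i := by
  set C : Matrix (Fin n) (Fin n) MP := mpMul (mpConj B) A with hC
  set x : Fin n → MP := mpMulVec (mpStar C) u with hx
  have hCx : ∀ k, mpMulVec C x k ≤ x k := by
    intro k
    refine Finset.sup_le fun j _ => ?_
    show C k j + x j ≤ x k
    have hxj : x j = Finset.univ.sup fun l => mpStar C j l + u l := rfl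
    rw [hxj, mp_add_sup]
    refine Finset.sup_le fun l _ => ?_
    have h1 : C k j + (mpStar C j l + u l) = (C k j + mpStar C j l) + u l :=
      (add_assoc _ _ _).symm
    rw [h1]
    have h2 : C k j + mpStar C j l ≤ mpMul C (mpStar C) k l :=
      Finset.le_sup (f := fun j' => C k j' + mpStar C j' l) (Finset.mem_univ j)
    have h3 : mpMul C (mpStar C) k l ≤ mpStar C k l := mul_star_le C htr k l
    calc (C k j + mpStar C j l) + u l ≤ mpStar C k l + u l :=
          add_le_add_left (h2.trans h3) _
      _ ≤ x k := Finset.le_sup (f := fun l' => mpStar C k l' + u l') (Finset.mem_univ l)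
  intro i
  refine Finset.sup_le fun j _ => ?_
  show A i j + x j ≤ mpMulVec B x i
  obtain ⟨k, hk⟩ := hB i
  obtain ⟨b, hb⟩ := WithBot.ne_bot_iff_exists.mp hk
  have hcc : ((b : ℝ) : MP) + ((-b : ℝ) : MP) = 0 := by rw [← WithBot.coe_add]; norm_num
  have h1 : ((-b : ℝ) : MP) + (A i j + x j) ≤ mpMulVec C x k := by
    have hc : ((-b : ℝ) : MP) + A i j ≤ C k j := by
      have h : mpConj B k i + A i j ≤ C k j :=
        Finset.le_sup (f := fun l => mpConj B k l + A l j) (Finset.mem_univ i)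
      have hconj : mpConj B k i = ((-b : ℝ) : MP) := by
        simp [mpConj, ← hb]
      rwa [hconj] at h
    calc ((-b : ℝ) : MP) + (A i j + x j) = (((-b : ℝ) : MP) + A i j) + x j :=
          (add_assoc _ _ _).symm
      _ ≤ C k j + x j := add_le_add_left hc _
      _ ≤ mpMulVec C x k := Finset.le_sup (f := fun j' => C k j' + x j') (Finset.mem_univ j)
  have h2 : A i j + x j ≤ ((b : ℝ) : MP) + mpMulVec C x k := by
    calc A i j + x j = ((b : ℝ) : MP) + (((-b : ℝ) : MP) + (A i j + x j)) := by
          rw [← add_assoc, hcc, zero_add]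
      _ ≤ _ := add_le_add_right h1 _
  refine h2.trans ?_
  have h3 : ((b : ℝ) : MP) + mpMulVec C x k ≤ ((b : ℝ) : MP) + x k :=
    add_le_add_right (hCx k) _
  refine h3.trans ?_
  have h4 : B i k + x k ≤ mpMulVec B x i :=
    Finset.le_sup (f := fun k' => B i k' + x k') (Finset.mem_univ k)
  rw [← hb] at h4
  exact h4
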